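/- Let θ : (0,∞) → ℂ be continuous and suppose there are constants C, δ > 0 with ‖θ(t)‖ ≤ C e^{−δt} for all t ≥ 1. Suppose there is a strictly increasing sequence of real numbers α₀ < α₁ < α₂ < ⋯ with α_k → +∞ and complex numbers c_k such that for every K there is a constant C_K with ‖θ(t) − ∑_{k=0}^{K} c_k t^{α_k}‖ ≤ C_K t^{α_{K+1}} for all t ∈ (0,1]. Fix λ ≥ 0. Then: (a) for every z ∈ ℂ with Re z > −α₀ the integral M(z) = ∫₀^∞ t^{z−1} e^{−λt} θ(t) dt converges absolutely; (b) setting P = {−α_k − n : k ∈ ℕ, n ∈ ℕ} (a discrete subset of ℝ), there is a function F, holomorphic on ℂ ∖ P, with F(z) = M(z) for all z with Re z > −α₀ and z ∉ P; and (c) every point p ∈ P is at most a simple pole of F, with lim_{z→p} (z − p) F(z) = ∑_{(k,n) : α_k + n = −p} (−λ)^n c_k / n!. -/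

import Mathlib

open MeasureTheory Filter

section MellinHeatAux
open MeasureTheory Filter Set Complex

noncomputable def coefA (lam : ℝ) (c : ℕ → ℂ) (p : ℕ × ℕ) : ℂ :=
  (-(lam : ℂ)) ^ p.2 * c p.1 / (p.2.factorial : ℂ)

def expB (α : ℕ → ℝ) (p : ℕ × ℕ) : ℝ := α p.1 + p.2

noncomputable def SS (lam : ℝ) (α : ℕ → ℝ) (c : ℕ → ℂ) (A : Finset (ℕ × ℕ)) (t : ℝ) : ℂ :=
  ∑ p ∈ A, coefA lam c p * (t : ℂ) ^ ((expB α p : ℝ) : ℂ)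

lemma hasMellin_term (lam : ℝ) (α : ℕ → ℝ) (c : ℕ → ℂ) (p : ℕ × ℕ) {z : ℂ}
    (hz : 0 < z.re + expB α p) :
    HasMellin (Set.indicator (Set.Ioc 0 1)
      (fun t : ℝ => coefA lam c p * (t : ℂ) ^ ((expB α p : ℝ) : ℂ))) z
      (coefA lam c p / (z + ((expB α p : ℝ) : ℂ))) := by
  have h0 : 0 < z.re + (((expB α p : ℝ) : ℂ)).re := by simpa using hz
  have h1 := hasMellin_cpow_Ioc ((expB α p : ℝ) : ℂ) h0
  have heq : Set.indicator (Set.Ioc 0 1)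
      (fun t : ℝ => coefA lam c p * (t : ℂ) ^ ((expB α p : ℝ) : ℂ))
      = fun t : ℝ => coefA lam c p •
        Set.indicator (Set.Ioc 0 1) (fun t : ℝ => (t : ℂ) ^ ((expB α p : ℝ) : ℂ)) t := by
    funext t
    simp [Set.indicator_const_mul, smul_eq_mul]
  constructor
  · rw [heq]; exact h1.1.const_smul _
  · rw [heq, mellin_const_smul, h1.2, smul_eq_mul, mul_one_div]

lemma hasMellin_SS (lam : ℝ) (α : ℕ → ℝ) (c : ℕ → ℂ) (A : Finset (ℕ × ℕ)) {z : ℂ}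
    (hz : ∀ p ∈ A, 0 < z.re + expB α p) :
    HasMellin (Set.indicator (Set.Ioc 0 1) (SS lam α c A)) z
      (∑ p ∈ A, coefA lam c p / (z + ((expB α p : ℝ) : ℂ))) := by
  classical
  induction A using Finset.cons_induction with
  | empty =>
      have h0 : Set.indicator (Set.Ioc (0:ℝ) 1) (SS lam α c ∅) = fun _ => (0:ℂ) := by
        funext t; simp [SS]
      constructor
      · rw [MellinConvergent, h0]
        simpa using integrableOn_zero (s := Set.Ioi (0:ℝ)) (μ := volume) (E := ℂ)
      · rw [h0]; simp [mellin]
  | cons x A hx ih =>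
      have hzx : 0 < z.re + expB α x := hz x (Finset.mem_cons_self _ _)
      have ihA := ih fun p hp => hz p (Finset.mem_cons.mpr (Or.inr hp))
      have hterm := hasMellin_term lam α c x hzx
      have heq : Set.indicator (Set.Ioc (0:ℝ) 1) (SS lam α c (Finset.cons x A hx))
          = fun t => Set.indicator (Set.Ioc 0 1)
              (fun t : ℝ => coefA lam c x * (t : ℂ) ^ ((expB α x : ℝ) : ℂ)) t
            + Set.indicator (Set.Ioc 0 1) (SS lam α c A) t := by
        funext t
        by_cases ht : t ∈ Set.Ioc (0:ℝ) 1 <;>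
          simp [Set.indicator, ht, SS, Finset.sum_insert hx]
      rw [heq, Finset.sum_cons, ← hterm.2, ← ihA.2]
      exact hasMellin_add hterm.1 ihA.1
noncomputable def gg (θ : ℝ → ℂ) (lam : ℝ) (t : ℝ) : ℂ :=
  Complex.exp (-(lam : ℂ) * t) * θ t

def AN (N : ℕ) : Finset (ℕ × ℕ) := Finset.range (N + 1) ×ˢ Finset.range (N + 1)

noncomputable def hh (θ : ℝ → ℂ) (lam : ℝ) (α : ℕ → ℝ) (c : ℕ → ℂ) (N : ℕ) (t : ℝ) : ℂ :=
  gg θ lam t - Set.indicator (Set.Ioc 0 1) (SS lam α c (AN N)) t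

def gamm (α : ℕ → ℝ) (N : ℕ) : ℝ := min (α (N + 1)) (α 0 + (N + 1))

noncomputable def Phi (θ : ℝ → ℂ) (lam : ℝ) (α : ℕ → ℝ) (c : ℕ → ℂ) (N : ℕ) (z : ℂ) : ℂ :=
  mellin (hh θ lam α c N) z + ∑ p ∈ AN N, coefA lam c p / (z + ((expB α p : ℝ) : ℂ))

lemma norm_exp_neg_lam (lam t : ℝ) :
    ‖Complex.exp (-(lam : ℂ) * t)‖ = Real.exp (-(lam * t)) := by
  have h : -(lam : ℂ) * t = ((-(lam * t) : ℝ) : ℂ) := by push_cast; ring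
  rw [h, ← Complex.ofReal_exp, Complex.norm_real, Real.norm_eq_abs,
    abs_of_pos (Real.exp_pos _)]

lemma gg_continuousOn (θ : ℝ → ℂ) (hcont : ContinuousOn θ (Set.Ioi 0)) (lam : ℝ) :
    ContinuousOn (gg θ lam) (Set.Ioi 0) := by
  apply ContinuousOn.mul _ hcont
  exact (Complex.continuous_exp.comp (by continuity)).continuousOn

lemma SS_continuousOn (lam : ℝ) (α : ℕ → ℝ) (c : ℕ → ℂ) (A : Finset (ℕ × ℕ)) :
    ContinuousOn (SS lam α c A) (Set.Ioi 0) := by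
  apply continuousOn_finset_sum
  intro p _
  apply ContinuousOn.mul continuousOn_const
  intro t ht
  exact (Complex.continuousAt_ofReal_cpow_const t _ (Or.inr (ne_of_gt ht))).continuousWithinAt

lemma hh_locInt (θ : ℝ → ℂ) (hcont : ContinuousOn θ (Set.Ioi 0)) (lam : ℝ)
    (α : ℕ → ℝ) (c : ℕ → ℂ) (N : ℕ) :
    LocallyIntegrableOn (hh θ lam α c N) (Set.Ioi 0) := by
  have h1 : LocallyIntegrableOn (gg θ lam) (Set.Ioi 0) :=
    (gg_continuousOn θ hcont lam).locallyIntegrableOn measurableSet_Ioi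
  have h2 : LocallyIntegrableOn
      (Set.indicator (Set.Ioc 0 1) (SS lam α c (AN N))) (Set.Ioi 0) := by
    rw [locallyIntegrableOn_iff isOpen_Ioi.isLocallyClosed]
    intro k hk hkc
    have hSS : IntegrableOn (SS lam α c (AN N)) k :=
      ((SS_continuousOn lam α c (AN N)).mono hk).integrableOn_compact hkc
    rw [IntegrableOn, integrable_indicator_iff measurableSet_Ioc]
    exact hSS.integrable.integrableOn
  exact h1.sub h2
open Finset in
lemma exp_tail (N : ℕ) (x : ℂ) :
    ‖Complex.exp x - ∑ n ∈ Finset.range N, x ^ n / n.factorial‖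
      ≤ ‖x‖ ^ N / N.factorial * Real.exp ‖x‖ := by
  have hs : Summable (fun n : ℕ => x ^ n / n.factorial) := NormedSpace.expSeries_div_summable x
  have hx : Complex.exp x = ∑' n : ℕ, x ^ n / n.factorial := by
    rw [Complex.exp_eq_exp_ℂ, NormedSpace.exp_eq_tsum_div]
  have h1 : Complex.exp x - ∑ n ∈ range N, x ^ n / n.factorial
      = ∑' n : ℕ, x ^ (n + N) / (n + N).factorial := by
    rw [hx, ← hs.sum_add_tsum_nat_add N]; ring
  have key : ∀ n : ℕ, ‖x ^ (n + N) / ((n + N).factorial : ℂ)‖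
      ≤ ‖x‖ ^ N / N.factorial * (‖x‖ ^ n / n.factorial) := by
    intro n
    rw [norm_div, norm_pow, Complex.norm_natCast, div_mul_div_comm, ← pow_add]
    have hfac : (N.factorial * n.factorial : ℝ) ≤ ((n + N).factorial : ℝ) := by
      exact_mod_cast Nat.le_of_dvd (Nat.factorial_pos _)
        (by rw [add_comm]; exact Nat.factorial_mul_factorial_dvd_factorial_add N n)
    rw [add_comm N n]
    refine div_le_div_of_nonneg_left (by positivity) ?_ hfac
    positivity
  have hgs : Summable (fun n : ℕ => ‖x‖ ^ N / N.factorial * (‖x‖ ^ n / n.factorial)) :=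
    (NormedSpace.expSeries_div_summable ‖x‖).mul_left _
  have hns : Summable (fun n : ℕ => ‖x ^ (n + N) / ((n + N).factorial : ℂ)‖) :=
    Summable.of_nonneg_of_le (fun n => norm_nonneg _) key hgs
  calc ‖Complex.exp x - ∑ n ∈ range N, x ^ n / n.factorial‖
      = ‖∑' n : ℕ, x ^ (n + N) / (n + N).factorial‖ := by rw [h1]
    _ ≤ ∑' n : ℕ, ‖x ^ (n + N) / ((n + N).factorial : ℂ)‖ := norm_tsum_le_tsum_norm hns
    _ ≤ ∑' n : ℕ, ‖x‖ ^ N / N.factorial * (‖x‖ ^ n / n.factorial) := Summable.tsum_le_tsum key hns hgs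
    _ = ‖x‖ ^ N / N.factorial * Real.exp ‖x‖ := by
        rw [tsum_mul_left, Real.exp_eq_exp_ℝ, NormedSpace.exp_eq_tsum_div]

-- algebraic identity: SS over the square equals product of exp Taylor sum and θ-expansion sum
lemma SS_eq_mul (lam : ℝ) (α : ℕ → ℝ) (c : ℕ → ℂ) (N : ℕ) {t : ℝ} (ht : 0 < t) :
    SS lam α c (AN N) t
      = (∑ n ∈ Finset.range (N + 1), (-(lam : ℂ) * t) ^ n / n.factorial)
        * (∑ k ∈ Finset.range (N + 1), c k * ((t ^ (α k) : ℝ) : ℂ)) := by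
  rw [SS, AN, Finset.sum_product, Finset.sum_mul_sum]
  rw [Finset.sum_comm]
  refine Finset.sum_congr rfl fun n _ => Finset.sum_congr rfl fun k _ => ?_
  have htC : (t : ℂ) ≠ 0 := Complex.ofReal_ne_zero.mpr (ne_of_gt ht)
  have h1 : ((expB α (k, n) : ℝ) : ℂ) = ((α k : ℝ) : ℂ) + (n : ℂ) := by
    rw [expB]; push_cast; ring
  rw [coefA, h1, Complex.cpow_add _ _ htC, Complex.cpow_natCast,
    Complex.ofReal_cpow ht.le, mul_pow]
  push_cast
  ring

lemma hh_bound (θ : ℝ → ℂ) (α : ℕ → ℝ) (hα : StrictMono α) (c : ℕ → ℂ)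
    (lam : ℝ) (hlam : 0 ≤ lam) (N : ℕ) (CN : ℝ)
    (hCN : ∀ t ∈ Set.Ioc (0 : ℝ) 1,
      ‖θ t - ∑ k ∈ Finset.range (N + 1), c k * ((t ^ (α k) : ℝ) : ℂ)‖ ≤ CN * t ^ (α (N + 1))) :
    ∃ D : ℝ, 0 ≤ D ∧ ∀ t ∈ Set.Ioc (0 : ℝ) 1,
      ‖hh θ lam α c N t‖ ≤ D * t ^ (gamm α N) := by
  set E : ℝ := lam ^ (N + 1) / (N + 1).factorial * Real.exp lam
      * (∑ k ∈ Finset.range (N + 1), ‖c k‖) with hE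
  have hE0 : 0 ≤ E := by
    apply mul_nonneg (mul_nonneg (by positivity) (Real.exp_pos _).le)
    exact Finset.sum_nonneg fun k _ => norm_nonneg _
  refine ⟨|CN| + E, by positivity, fun t ht => ?_⟩
  obtain ⟨ht0, ht1⟩ := ht
  set Sθ : ℂ := ∑ k ∈ Finset.range (N + 1), c k * ((t ^ (α k) : ℝ) : ℂ) with hSθ
  set T : ℂ := ∑ n ∈ Finset.range (N + 1), (-(lam : ℂ) * t) ^ n / n.factorial with hT
  have hdecomp : hh θ lam α c N t
      = Complex.exp (-(lam : ℂ) * t) * (θ t - Sθ)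
        + (Complex.exp (-(lam : ℂ) * t) - T) * Sθ := by
    rw [hh, Set.indicator_of_mem (show t ∈ Set.Ioc (0:ℝ) 1 from ⟨ht0, ht1⟩), SS_eq_mul lam α c N ht0, gg, hSθ, hT]
    ring
  -- bound pieces
  have hexp1 : ‖Complex.exp (-(lam : ℂ) * t)‖ ≤ 1 := by
    rw [norm_exp_neg_lam]
    exact Real.exp_le_one_iff.mpr (by nlinarith)
  have hbound1 : ‖θ t - Sθ‖ ≤ |CN| * t ^ (gamm α N) := by
    refine le_trans (hCN t ⟨ht0, ht1⟩) ?_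
    have h1 : t ^ (α (N + 1)) ≤ t ^ (gamm α N) :=
      Real.rpow_le_rpow_of_exponent_ge ht0 ht1 (min_le_left _ _)
    have h2 : (0:ℝ) ≤ t ^ (α (N + 1)) := Real.rpow_nonneg ht0.le _
    calc CN * t ^ (α (N + 1)) ≤ |CN| * t ^ (α (N + 1)) :=
          mul_le_mul_of_nonneg_right (le_abs_self _) h2
      _ ≤ |CN| * t ^ (gamm α N) := mul_le_mul_of_nonneg_left h1 (abs_nonneg _)
  have hnormx : ‖-(lam : ℂ) * t‖ = lam * t := by
    rw [norm_mul, norm_neg, Complex.norm_real, Complex.norm_real, Real.norm_eq_abs,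
      Real.norm_eq_abs, _root_.abs_of_nonneg hlam, _root_.abs_of_nonneg ht0.le]
  have hbound2 : ‖Complex.exp (-(lam : ℂ) * t) - T‖
      ≤ lam ^ (N + 1) / (N + 1).factorial * Real.exp lam * t ^ (N + 1 : ℕ) := by
    refine le_trans (exp_tail (N + 1) (-(lam : ℂ) * t)) ?_
    rw [hnormx]
    have h1 : (lam * t) ^ (N + 1) = lam ^ (N + 1) * t ^ (N + 1) := mul_pow _ _ _
    have h2 : Real.exp (lam * t) ≤ Real.exp lam :=
      Real.exp_le_exp.mpr (by nlinarith)
    have h3 : (0:ℝ) ≤ lam ^ (N + 1) * t ^ (N + 1) / (N + 1).factorial := by positivity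
    calc (lam * t) ^ (N + 1) / (N + 1).factorial * Real.exp (lam * t)
        ≤ (lam * t) ^ (N + 1) / (N + 1).factorial * Real.exp lam := by
          apply mul_le_mul_of_nonneg_left h2 (by positivity)
      _ = lam ^ (N + 1) / (N + 1).factorial * Real.exp lam * t ^ (N + 1 : ℕ) := by
          rw [h1]; ring
  have hbound3 : ‖Sθ‖ ≤ (∑ k ∈ Finset.range (N + 1), ‖c k‖) * t ^ (α 0) := by
    rw [hSθ]
    refine le_trans (norm_sum_le _ _) ?_
    rw [Finset.sum_mul]
    refine Finset.sum_le_sum fun k _ => ?_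
    rw [norm_mul, Complex.norm_real, Real.norm_eq_abs,
      _root_.abs_of_nonneg (Real.rpow_nonneg ht0.le _)]
    exact mul_le_mul_of_nonneg_left
      (Real.rpow_le_rpow_of_exponent_ge ht0 ht1 (hα.monotone (Nat.zero_le k)))
      (norm_nonneg _)
  have hpow : (t : ℝ) ^ (N + 1 : ℕ) * t ^ (α 0) = t ^ (α 0 + (N + 1 : ℕ)) := by
    rw [← Real.rpow_natCast t (N + 1), ← Real.rpow_add ht0]
    ring_nf
  have hpow2 : t ^ (α 0 + (N + 1 : ℕ)) ≤ t ^ (gamm α N) := by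
    apply Real.rpow_le_rpow_of_exponent_ge ht0 ht1
    refine le_trans (min_le_right _ _) ?_
    push_cast
    linarith
  calc ‖hh θ lam α c N t‖
      ≤ ‖Complex.exp (-(lam : ℂ) * t)‖ * ‖θ t - Sθ‖
        + ‖Complex.exp (-(lam : ℂ) * t) - T‖ * ‖Sθ‖ := by
        rw [hdecomp]
        exact le_trans (norm_add_le _ _) (by rw [norm_mul, norm_mul])
    _ ≤ 1 * (|CN| * t ^ gamm α N)
        + (lam ^ (N + 1) / (N + 1).factorial * Real.exp lam * t ^ (N + 1 : ℕ))
          * ((∑ k ∈ Finset.range (N + 1), ‖c k‖) * t ^ (α 0)) :=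
        add_le_add (mul_le_mul hexp1 hbound1 (norm_nonneg _) zero_le_one)
          (mul_le_mul hbound2 hbound3 (norm_nonneg _) (by positivity))
    _ = |CN| * t ^ gamm α N + E * (t ^ (N + 1 : ℕ) * t ^ (α 0)) := by rw [hE]; ring
    _ ≤ |CN| * t ^ gamm α N + E * t ^ gamm α N := by
        rw [hpow]
        exact add_le_add le_rfl (mul_le_mul_of_nonneg_left hpow2 hE0)
    _ = (|CN| + E) * t ^ gamm α N := by ring

lemma gg_bound_top (θ : ℝ → ℂ) (C δ : ℝ)
    (hdecay : ∀ t : ℝ, 1 ≤ t → ‖θ t‖ ≤ C * Real.exp (-δ * t)) (lam : ℝ) (hlam : 0 ≤ lam) :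
    ∀ t : ℝ, 1 ≤ t → ‖gg θ lam t‖ ≤ C * ‖Real.exp (-δ * t)‖ := by
  intro t ht
  have h1 : ‖Complex.exp (-(lam : ℂ) * t)‖ ≤ 1 := by
    rw [norm_exp_neg_lam]
    exact Real.exp_le_one_iff.mpr (by nlinarith)
  calc ‖gg θ lam t‖ = ‖Complex.exp (-(lam : ℂ) * t)‖ * ‖θ t‖ := norm_mul _ _
    _ ≤ 1 * (C * Real.exp (-δ * t)) :=
        mul_le_mul h1 (hdecay t ht) (norm_nonneg _) zero_le_one
    _ = C * ‖Real.exp (-δ * t)‖ := by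
        rw [one_mul, Real.norm_eq_abs, _root_.abs_of_pos (Real.exp_pos _)]

lemma hh_isBigO_top (θ : ℝ → ℂ) (C δ : ℝ)
    (hdecay : ∀ t : ℝ, 1 ≤ t → ‖θ t‖ ≤ C * Real.exp (-δ * t))
    (lam : ℝ) (hlam : 0 ≤ lam) (α : ℕ → ℝ) (c : ℕ → ℂ) (N : ℕ) :
    (hh θ lam α c N) =O[atTop] fun t => Real.exp (-δ * t) := by
  apply Asymptotics.IsBigO.of_bound C
  filter_upwards [eventually_gt_atTop (1 : ℝ)] with t ht
  have hind : Set.indicator (Set.Ioc (0:ℝ) 1) (SS lam α c (AN N)) t = 0 :=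
    Set.indicator_of_notMem (fun h => absurd h.2 (not_le.mpr ht)) _
  have : hh θ lam α c N t = gg θ lam t := by rw [hh, hind, sub_zero]
  rw [this]
  exact gg_bound_top θ C δ hdecay lam hlam t ht.le

lemma gg_isBigO_top (θ : ℝ → ℂ) (C δ : ℝ)
    (hdecay : ∀ t : ℝ, 1 ≤ t → ‖θ t‖ ≤ C * Real.exp (-δ * t)) (lam : ℝ) (hlam : 0 ≤ lam) :
    (gg θ lam) =O[atTop] fun t => Real.exp (-δ * t) := by
  apply Asymptotics.IsBigO.of_bound C
  filter_upwards [eventually_ge_atTop (1 : ℝ)] with t ht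
  exact gg_bound_top θ C δ hdecay lam hlam t ht

lemma isBigO_bot_of_bound (f : ℝ → ℂ) (γ : ℝ) (D : ℝ)
    (hb : ∀ t ∈ Set.Ioc (0:ℝ) 1, ‖f t‖ ≤ D * t ^ γ) :
    f =O[nhdsWithin 0 (Set.Ioi 0)] fun t : ℝ => t ^ γ := by
  apply Asymptotics.IsBigO.of_bound D
  filter_upwards [Ioc_mem_nhdsGT (by norm_num : (0:ℝ) < 1)] with t ht
  calc ‖f t‖ ≤ D * t ^ γ := hb t ht
    _ = D * ‖t ^ γ‖ := by
        rw [Real.norm_eq_abs, _root_.abs_of_nonneg (Real.rpow_nonneg ht.1.le _)]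

lemma gg_bound_bot (θ : ℝ → ℂ) (α : ℕ → ℝ) (hα : StrictMono α) (c : ℕ → ℂ) (C0 : ℝ)
    (hC0 : ∀ t ∈ Set.Ioc (0 : ℝ) 1,
      ‖θ t - ∑ k ∈ Finset.range 1, c k * ((t ^ (α k) : ℝ) : ℂ)‖ ≤ C0 * t ^ (α 1))
    (lam : ℝ) (hlam : 0 ≤ lam) :
    ∀ t ∈ Set.Ioc (0 : ℝ) 1, ‖gg θ lam t‖ ≤ (‖c 0‖ + |C0|) * t ^ (α 0) := by
  intro t ⟨ht0, ht1⟩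
  have h1 : ‖Complex.exp (-(lam : ℂ) * t)‖ ≤ 1 := by
    rw [norm_exp_neg_lam]; exact Real.exp_le_one_iff.mpr (by nlinarith)
  have hθ : ‖θ t‖ ≤ ‖c 0‖ * t ^ (α 0) + C0 * t ^ (α 1) := by
    have h2 := hC0 t ⟨ht0, ht1⟩
    rw [Finset.sum_range_one] at h2
    calc ‖θ t‖ = ‖θ t - c 0 * ((t ^ (α 0) : ℝ) : ℂ) + c 0 * ((t ^ (α 0) : ℝ) : ℂ)‖ := by
          ring_nf
      _ ≤ ‖θ t - c 0 * ((t ^ (α 0) : ℝ) : ℂ)‖ + ‖c 0 * ((t ^ (α 0) : ℝ) : ℂ)‖ := norm_add_le _ _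
      _ ≤ C0 * t ^ (α 1) + ‖c 0‖ * t ^ (α 0) := by
          apply add_le_add h2
          rw [norm_mul, Complex.norm_real, Real.norm_eq_abs,
            _root_.abs_of_nonneg (Real.rpow_nonneg ht0.le _)]
      _ = ‖c 0‖ * t ^ (α 0) + C0 * t ^ (α 1) := by ring
  have hr : t ^ (α 1) ≤ t ^ (α 0) :=
    Real.rpow_le_rpow_of_exponent_ge ht0 ht1 (hα.monotone (Nat.zero_le 1))
  have hr0 : (0:ℝ) ≤ t ^ (α 1) := Real.rpow_nonneg ht0.le _
  calc ‖gg θ lam t‖ = ‖Complex.exp (-(lam : ℂ) * t)‖ * ‖θ t‖ := norm_mul _ _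
    _ ≤ 1 * (‖c 0‖ * t ^ (α 0) + C0 * t ^ (α 1)) :=
        mul_le_mul h1 hθ (norm_nonneg _) zero_le_one
    _ ≤ (‖c 0‖ + |C0|) * t ^ (α 0) := by
        rw [one_mul]
        have : C0 * t ^ (α 1) ≤ |C0| * t ^ (α 0) := by
          calc C0 * t ^ (α 1) ≤ |C0| * t ^ (α 1) :=
                mul_le_mul_of_nonneg_right (le_abs_self _) hr0
            _ ≤ |C0| * t ^ (α 0) := mul_le_mul_of_nonneg_left hr (abs_nonneg _)
        nlinarith [Real.rpow_nonneg ht0.le (α 0), norm_nonneg (c 0)]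

lemma hh_mellin (θ : ℝ → ℂ) (hcont : ContinuousOn θ (Set.Ioi 0)) (C δ : ℝ) (hδ : 0 < δ)
    (hdecay : ∀ t : ℝ, 1 ≤ t → ‖θ t‖ ≤ C * Real.exp (-δ * t))
    (lam : ℝ) (hlam : 0 ≤ lam) (α : ℕ → ℝ) (c : ℕ → ℂ) (N : ℕ) (D : ℝ)
    (hD : ∀ t ∈ Set.Ioc (0:ℝ) 1, ‖hh θ lam α c N t‖ ≤ D * t ^ (gamm α N))
    (z : ℂ) (hz : -gamm α N < z.re) :
    MellinConvergent (hh θ lam α c N) z ∧ DifferentiableAt ℂ (mellin (hh θ lam α c N)) z := by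
  have hloc := hh_locInt θ hcont lam α c N
  have htop := hh_isBigO_top θ C δ hdecay lam hlam α c N
  have hbot : hh θ lam α c N =O[nhdsWithin 0 (Set.Ioi 0)]
      (fun t : ℝ => t ^ (-(-gamm α N))) := by
    simpa using isBigO_bot_of_bound _ _ _ hD
  have hz' : -gamm α N < z.re := hz
  exact ⟨mellinConvergent_of_isBigO_rpow_exp hδ hloc htop hbot hz',
    mellin_differentiableAt_of_isBigO_rpow_exp hδ hloc htop hbot hz'⟩

lemma gg_mellin (θ : ℝ → ℂ) (hcont : ContinuousOn θ (Set.Ioi 0)) (C δ : ℝ) (hδ : 0 < δ)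
    (hdecay : ∀ t : ℝ, 1 ≤ t → ‖θ t‖ ≤ C * Real.exp (-δ * t))
    (lam : ℝ) (hlam : 0 ≤ lam) (α : ℕ → ℝ) (hα : StrictMono α) (c : ℕ → ℂ) (C0 : ℝ)
    (hC0 : ∀ t ∈ Set.Ioc (0 : ℝ) 1,
      ‖θ t - ∑ k ∈ Finset.range 1, c k * ((t ^ (α k) : ℝ) : ℂ)‖ ≤ C0 * t ^ (α 1))
    (z : ℂ) (hz : -α 0 < z.re) :
    MellinConvergent (gg θ lam) z := by
  have hloc : LocallyIntegrableOn (gg θ lam) (Set.Ioi 0) :=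
    (gg_continuousOn θ hcont lam).locallyIntegrableOn measurableSet_Ioi
  have htop := gg_isBigO_top θ C δ hdecay lam hlam
  have hbot : gg θ lam =O[nhdsWithin 0 (Set.Ioi 0)] (fun t : ℝ => t ^ (-(-α 0))) := by
    simpa using isBigO_bot_of_bound _ _ _ (gg_bound_bot θ α hα c C0 hC0 lam hlam)
  exact mellinConvergent_of_isBigO_rpow_exp hδ hloc htop hbot hz

lemma identification (θ : ℝ → ℂ) (lam : ℝ) (α : ℕ → ℝ) (hα : StrictMono α) (c : ℕ → ℂ)
    (N : ℕ) (z : ℂ) (hz : -α 0 < z.re) (hgg : MellinConvergent (gg θ lam) z) :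
    Phi θ lam α c N z = mellin (gg θ lam) z := by
  have hpos : ∀ p ∈ AN N, 0 < z.re + expB α p := by
    intro p _
    have h1 : α 0 ≤ α p.1 := hα.monotone (Nat.zero_le _)
    have h2 : (0:ℝ) ≤ p.2 := Nat.cast_nonneg _
    rw [expB]; linarith
  have hS := hasMellin_SS lam α c (AN N) hpos
  have hsub := hasMellin_sub hgg hS.1
  have hmel : mellin (hh θ lam α c N) z
      = mellin (gg θ lam) z
        - mellin (Set.indicator (Set.Ioc 0 1) (SS lam α c (AN N))) z := hsub.2
  rw [Phi, hmel, hS.2]; ring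

lemma agreement (θ : ℝ → ℂ) (lam : ℝ) (α : ℕ → ℝ) (hα : StrictMono α) (c : ℕ → ℂ)
    (N N' : ℕ) (hNN : N ≤ N') (z : ℂ) (hz : -gamm α N < z.re)
    (hconv' : MellinConvergent (hh θ lam α c N') z) :
    Phi θ lam α c N z = Phi θ lam α c N' z := by
  classical
  have hsub : AN N ⊆ AN N' :=
    Finset.product_subset_product (Finset.range_subset_range.mpr (by omega))
      (Finset.range_subset_range.mpr (by omega))
  have hfun : hh θ lam α c N = fun t =>
      hh θ lam α c N' t + Set.indicator (Set.Ioc 0 1) (SS lam α c (AN N' \ AN N)) t := by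
    funext t
    by_cases hmem : t ∈ Set.Ioc (0:ℝ) 1
    · simp only [hh, Set.indicator_of_mem hmem]
      have hsum := Finset.sum_sdiff (f := fun p =>
        coefA lam c p * (t : ℂ) ^ ((expB α p : ℝ) : ℂ)) hsub
      simp only [SS]
      rw [← hsum]; ring
    · simp [hh, Set.indicator_of_notMem hmem]
  have hpos : ∀ p ∈ AN N' \ AN N, 0 < z.re + expB α p := by
    intro p hp
    rw [Finset.mem_sdiff] at hp
    have hγ : gamm α N ≤ expB α p := by
      rcases hp with ⟨hp1, hp2⟩
      rw [AN, Finset.mem_product, Finset.mem_range, Finset.mem_range] at hp2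
      rw [not_and_or, not_lt, not_lt] at hp2
      rw [expB, gamm]
      rcases hp2 with h | h
      · have : α (N + 1) ≤ α p.1 := hα.monotone h
        have h2 : (0:ℝ) ≤ p.2 := Nat.cast_nonneg _
        have := min_le_left (α (N + 1)) (α 0 + (N + 1 : ℕ))
        push_cast at *
        linarith
      · have : ((N:ℝ) + 1) ≤ p.2 := by exact_mod_cast h
        have h1 : α 0 ≤ α p.1 := hα.monotone (Nat.zero_le _)
        have := min_le_right (α (N + 1)) (α 0 + (N + 1 : ℕ))
        push_cast at *
        linarith
    linarith
  have hSdiff := hasMellin_SS lam α c (AN N' \ AN N) hpos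
  have hadd := hasMellin_add hconv' hSdiff.1
  have hmel : mellin (hh θ lam α c N) z
      = mellin (hh θ lam α c N') z
        + mellin (Set.indicator (Set.Ioc 0 1) (SS lam α c (AN N' \ AN N))) z := by
    rw [hfun]; exact hadd.2
  have hsum2 : (∑ p ∈ AN N' \ AN N, coefA lam c p / (z + ((expB α p : ℝ) : ℂ)))
      + ∑ p ∈ AN N, coefA lam c p / (z + ((expB α p : ℝ) : ℂ))
      = ∑ p ∈ AN N', coefA lam c p / (z + ((expB α p : ℝ) : ℂ)) :=
    Finset.sum_sdiff hsub
  rw [Phi, Phi, hmel, hSdiff.2, ← hsum2]; ring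

lemma pole_isolated (α : ℕ → ℝ) (hα : StrictMono α) (hαtop : Tendsto α atTop atTop) (w : ℂ) :
    ∃ ε > (0:ℝ), ∀ z : ℂ, dist z w < ε → z ≠ w → ∀ k n : ℕ, z ≠ -(α k : ℂ) - (n : ℂ) := by
  set B : ℝ := ‖w‖ + 1 with hB
  obtain ⟨K, hK⟩ := eventually_atTop.mp (hαtop.eventually_gt_atTop B)
  set M : ℕ := ⌈B - α 0⌉₊ + 1 with hM
  have hMlarge : ∀ n : ℕ, M ≤ n → ∀ k : ℕ, B < α k + n := by
    intro n hn k
    have h1 : B - α 0 < (M : ℝ) := by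
      calc B - α 0 ≤ (⌈B - α 0⌉₊ : ℝ) := Nat.le_ceil _
        _ < M := by rw [hM]; push_cast; linarith
    have h2 : (M : ℝ) ≤ n := by exact_mod_cast hn
    have h3 : α 0 ≤ α k := hα.monotone (Nat.zero_le k)
    linarith
  set Q : Set ℂ := ((fun p : ℕ × ℕ => -(α p.1 : ℂ) - (p.2 : ℂ)) ''
      ((Finset.range K ×ˢ Finset.range M : Finset (ℕ × ℕ)) : Set (ℕ × ℕ))) \ {w} with hQ
  have hQfin : Q.Finite := Set.Finite.diff (Set.Finite.image _ (Finset.finite_toSet _))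
  have hwQ : w ∉ Q := fun h => h.2 rfl
  have hQc : IsOpen Qᶜ := hQfin.isClosed.isOpen_compl
  obtain ⟨ε₀, hε₀, hball⟩ := Metric.isOpen_iff.mp hQc w hwQ
  refine ⟨min ε₀ (1/2), lt_min hε₀ (by norm_num), fun z hz hzw k n => ?_⟩
  have hzB : ‖z‖ < B := by
    have := norm_sub_norm_le z w
    have hd : dist z w < 1/2 := lt_of_lt_of_le hz (min_le_right _ _)
    rw [dist_eq_norm] at hd
    rw [hB]; linarith
  by_cases hmem : k < K ∧ n < M
  · -- the point is in the finite set; either it's w (but z ≠ w) or in Q (but z ∉ Q)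
    by_cases hpw : -(α k : ℂ) - (n : ℂ) = w
    · rw [hpw]; exact hzw
    · intro hcon
      have hzQ : z ∈ Qᶜ := hball (lt_of_lt_of_le hz (min_le_left _ _))
      apply hzQ
      refine ⟨⟨(k, n), ?_, hcon.symm⟩, by rw [hcon]; exact hpw⟩
      simp [hmem.1, hmem.2]
  · -- far away point
    intro hcon
    have hbig : B < α k + n := by
      rcases not_and_or.mp hmem with h | h
      · have : B < α k := hK k (le_of_not_gt h)
        have : (0:ℝ) ≤ n := Nat.cast_nonneg n
        linarith
      · exact hMlarge n (le_of_not_gt h) k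
    have hnorm : ‖-(α k : ℂ) - (n : ℂ)‖ = |α k + (n:ℝ)| := by
      have : -(α k : ℂ) - (n : ℂ) = ((-(α k + n) : ℝ) : ℂ) := by push_cast; ring
      rw [this, Complex.norm_real, Real.norm_eq_abs, abs_neg]
    have : B < ‖z‖ := by
      rw [hcon, hnorm]
      calc B < α k + n := hbig
        _ ≤ |α k + (n:ℝ)| := le_abs_self _
    linarith

lemma gamm_le_left (α : ℕ → ℝ) (N : ℕ) : gamm α N ≤ α (N + 1) := min_le_left _ _
lemma gamm_le_right (α : ℕ → ℝ) (N : ℕ) : gamm α N ≤ α 0 + (N + 1) := min_le_right _ _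

lemma gamm_big (α : ℕ → ℝ) (hα : StrictMono α) (hαtop : Tendsto α atTop atTop) (R : ℝ) :
    ∃ N : ℕ, R < gamm α N := by
  obtain ⟨K, hK⟩ := eventually_atTop.mp (hαtop.eventually_gt_atTop R)
  refine ⟨max K ⌈R - α 0⌉₊, lt_min (hK _ (by omega)) ?_⟩
  have h1 : R - α 0 ≤ (⌈R - α 0⌉₊ : ℝ) := Nat.le_ceil _
  have h2 : (⌈R - α 0⌉₊ : ℝ) ≤ (max K ⌈R - α 0⌉₊ : ℕ) := by exact_mod_cast Nat.le_max_right _ _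
  push_cast at h2 ⊢
  linarith

lemma gamm_mono (α : ℕ → ℝ) (hα : StrictMono α) : Monotone (gamm α) := by
  intro N N' h
  apply min_le_min (hα.monotone (by omega))
  have : (N:ℝ) ≤ N' := by exact_mod_cast h
  linarith

end MellinHeatAux


/-- Abstract analytic fact behind the Mellin transform of a heat trace: if `θ` is continuous
on `(0,∞)`, exponentially decaying at `∞`, and has an asymptotic expansion
`θ(t) ∼ ∑ c_k t^{α_k}` as `t → 0` with `α_k → ∞`, then for `λ ≥ 0` the Mellin transform
`M(z) = ∫₀^∞ t^{z−1} e^{−λt} θ(t) dt` converges for `Re z > −α₀` and extends to a function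
holomorphic off `P = {−α_k − n}`, with at most simple poles at points of `P`, the residue at
`p` being `∑_{α_k + n = −p} (−λ)^n c_k / n!`. -/
theorem stmt_3 (θ : ℝ → ℂ) (hcont : ContinuousOn θ (Set.Ioi 0))
    (C δ : ℝ) (hC : 0 < C) (hδ : 0 < δ)
    (hdecay : ∀ t : ℝ, 1 ≤ t → ‖θ t‖ ≤ C * Real.exp (-δ * t))
    (α : ℕ → ℝ) (hα : StrictMono α) (hαtop : Tendsto α atTop atTop)
    (c : ℕ → ℂ)
    (hasym : ∀ K : ℕ, ∃ CK : ℝ, ∀ t ∈ Set.Ioc (0 : ℝ) 1,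
      ‖θ t - ∑ k ∈ Finset.range (K + 1), c k * ((t ^ (α k) : ℝ) : ℂ)‖ ≤ CK * t ^ (α (K + 1)))
    (lam : ℝ) (hlam : 0 ≤ lam) :
    (∀ z : ℂ, -α 0 < z.re →
      IntegrableOn (fun t : ℝ => (t : ℂ) ^ (z - 1) * Complex.exp (-(lam : ℂ) * t) * θ t)
        (Set.Ioi 0)) ∧
    ∃ F : ℂ → ℂ,
      DifferentiableOn ℂ F {z : ℂ | ∀ k n : ℕ, z ≠ -(α k : ℂ) - (n : ℂ)} ∧
      (∀ z : ℂ, -α 0 < z.re → (∀ k n : ℕ, z ≠ -(α k : ℂ) - (n : ℂ)) →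
        F z = ∫ t in Set.Ioi (0 : ℝ),
          (t : ℂ) ^ (z - 1) * Complex.exp (-(lam : ℂ) * t) * θ t) ∧
      (∀ p : ℂ, (∃ k n : ℕ, p = -(α k : ℂ) - (n : ℂ)) →
        Tendsto (fun z : ℂ => (z - p) * F z) (nhdsWithin p {p}ᶜ)
          (nhds (∑' k : ℕ, ∑' n : ℕ,
            if (α k : ℂ) + (n : ℂ) = -p then (-(lam : ℂ)) ^ n * c k / (n.factorial : ℂ)
            else 0))) := by
  classical
  obtain ⟨C0, hC0⟩ := hasym 0
  have hgconv : ∀ z : ℂ, -α 0 < z.re → MellinConvergent (gg θ lam) z :=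
    fun z hz => gg_mellin θ hcont C δ hδ hdecay lam hlam α hα c C0 hC0 z hz
  have hinteq : ∀ z : ℂ, (fun t : ℝ => (t : ℂ) ^ (z - 1) • gg θ lam t)
      = fun t : ℝ => (t : ℂ) ^ (z - 1) * Complex.exp (-(lam : ℂ) * t) * θ t := by
    intro z; funext t; rw [smul_eq_mul, gg]; ring
  have hintg : ∀ z : ℂ, -α 0 < z.re →
      IntegrableOn (fun t : ℝ => (t : ℂ) ^ (z - 1) * Complex.exp (-(lam : ℂ) * t) * θ t)
        (Set.Ioi 0) := by
    intro z hz
    have h := hgconv z hz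
    rw [MellinConvergent, hinteq z] at h
    exact h
  refine ⟨hintg, ?_⟩
  -- uniform remainder bounds
  have hDex : ∀ N : ℕ, ∃ D : ℝ, 0 ≤ D ∧ ∀ t ∈ Set.Ioc (0 : ℝ) 1,
      ‖hh θ lam α c N t‖ ≤ D * t ^ (gamm α N) := by
    intro N
    obtain ⟨CN, hCN⟩ := hasym N
    exact hh_bound θ α hα c lam hlam N CN hCN
  choose D hD0 hD using hDex
  have hhm : ∀ N : ℕ, ∀ z : ℂ, -gamm α N < z.re →
      MellinConvergent (hh θ lam α c N) z ∧ DifferentiableAt ℂ (mellin (hh θ lam α c N)) z :=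
    fun N z hz => hh_mellin θ hcont C δ hδ hdecay lam hlam α c N (D N) (hD N) z hz
  have hagree : ∀ N N' : ℕ, ∀ z : ℂ, -gamm α N < z.re → -gamm α N' < z.re →
      Phi θ lam α c N z = Phi θ lam α c N' z := by
    intro N N' z h1 h2
    have hg1 : -gamm α (max N N') < z.re := by
      have := gamm_mono α hα (le_max_left N N')
      linarith
    have e1 := agreement θ lam α hα c N (max N N') (le_max_left _ _) z h1
      (hhm (max N N') z hg1).1
    have e2 := agreement θ lam α hα c N' (max N N') (le_max_right _ _) z h2
      (hhm (max N N') z hg1).1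
    rw [e1, e2]
  have hNex : ∀ z : ℂ, ∃ N : ℕ, -gamm α N < z.re := by
    intro z
    obtain ⟨N, hN⟩ := gamm_big α hα hαtop (-z.re)
    exact ⟨N, by linarith⟩
  set F : ℂ → ℂ := fun z => Phi θ lam α c (hNex z).choose z with hF
  have hFeq : ∀ N : ℕ, ∀ z : ℂ, -gamm α N < z.re → F z = Phi θ lam α c N z := by
    intro N z hz
    exact hagree _ N z (hNex z).choose_spec hz
  refine ⟨F, ?_, ?_, ?_⟩
  · -- differentiability
    intro z₀ hz₀
    obtain ⟨N, hN⟩ := hNex z₀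
    have hU : {z : ℂ | -gamm α N < z.re} ∈ nhds z₀ :=
      (isOpen_lt continuous_const Complex.continuous_re).mem_nhds hN
    have heqF : F =ᶠ[nhds z₀] Phi θ lam α c N := by
      filter_upwards [hU] with z hz using hFeq N z hz
    have hdPhi : DifferentiableAt ℂ (Phi θ lam α c N) z₀ := by
      apply DifferentiableAt.add (hhm N z₀ hN).2
      apply DifferentiableAt.fun_sum
      intro p _
      apply DifferentiableAt.div (differentiableAt_const _)
        ((differentiableAt_id.add (differentiableAt_const _)))
      intro hcon
      apply hz₀ p.1 p.2
      have : z₀ = -((expB α p : ℝ) : ℂ) := by linear_combination hcon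
      rw [this, expB]
      push_cast
      ring
    exact (hdPhi.congr_of_eventuallyEq heqF).differentiableWithinAt
  · -- formula
    intro z hz _
    have hc := (hNex z).choose_spec
    calc F z = Phi θ lam α c (hNex z).choose z := rfl
      _ = mellin (gg θ lam) z :=
          identification θ lam α hα c _ z hz (hgconv z hz)
      _ = ∫ t in Set.Ioi (0 : ℝ),
          (t : ℂ) ^ (z - 1) * Complex.exp (-(lam : ℂ) * t) * θ t := by
          rw [show mellin (gg θ lam) z
            = ∫ t in Set.Ioi (0 : ℝ), (t : ℂ) ^ (z - 1) • gg θ lam t from rfl, hinteq z]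
  · -- residues
    intro p ⟨k₀, n₀, hp⟩
    have hpre : p = ((-(α k₀ + n₀) : ℝ) : ℂ) := by rw [hp]; push_cast; ring
    have hpim : p.re = -(α k₀ + n₀) := by rw [hpre]; simp
    obtain ⟨N, hN⟩ := gamm_big α hα hαtop (-p.re)
    obtain ⟨ε₀, hε₀, hiso⟩ := pole_isolated α hα hαtop p
    set ε : ℝ := min ε₀ ((gamm α N + p.re) / 2) with hε
    have hεpos : 0 < ε := lt_min hε₀ (by linarith)
    -- key: on the punctured ball, F = Phi N
    have hev : ∀ᶠ z in nhdsWithin p {p}ᶜ,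
        (z - p) * Phi θ lam α c N z = (z - p) * F z := by
      rw [eventually_nhdsWithin_iff]
      filter_upwards [Metric.ball_mem_nhds p hεpos] with z hz hzp
      have hre : -gamm α N < z.re := by
        have h1 : |z.re - p.re| ≤ dist z p := by
          rw [Complex.dist_eq]
          exact (Complex.abs_re_le_norm (z - p))
        have h2 : dist z p < (gamm α N + p.re) / 2 :=
          lt_of_lt_of_le hz (min_le_right _ _)
        have := abs_le.mp h1
        linarith [this.1]
      rw [hFeq N z hre]
    set L : ℂ := ∑ q ∈ AN N,
      (if ((expB α q : ℝ) : ℂ) = -p then coefA lam c q else 0) with hL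
    have hPt : ∀ z : ℂ, (z - p) * Phi θ lam α c N z
        = (z - p) * mellin (hh θ lam α c N) z
          + ∑ q ∈ AN N, coefA lam c q * ((z - p) / (z + ((expB α q : ℝ) : ℂ))) := by
      intro z
      rw [Phi, mul_add, Finset.mul_sum]
      congr 1
      refine Finset.sum_congr rfl fun q _ => ?_
      rw [div_eq_mul_inv, div_eq_mul_inv]
      ring
    have hlim : Tendsto (fun z : ℂ => (z - p) * Phi θ lam α c N z)
        (nhdsWithin p {p}ᶜ) (nhds L) := by
      have hzp : Tendsto (fun z : ℂ => z - p) (nhdsWithin p {p}ᶜ) (nhds 0) := by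
        have : Tendsto (fun z : ℂ => z - p) (nhds p) (nhds (p - p)) :=
          (continuous_id.sub continuous_const).tendsto p
        rw [sub_self] at this
        exact this.mono_left nhdsWithin_le_nhds
      have h1 : Tendsto (fun z : ℂ => (z - p) * mellin (hh θ lam α c N) z)
          (nhdsWithin p {p}ᶜ) (nhds 0) := by
        have hc : ContinuousAt (mellin (hh θ lam α c N)) p :=
          ((hhm N p (by linarith)).2).continuousAt
        have := hzp.mul (hc.tendsto.mono_left nhdsWithin_le_nhds)
        rw [zero_mul] at this
        exact this
      have h2 : ∀ q ∈ AN N, Tendsto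
          (fun z : ℂ => coefA lam c q * ((z - p) / (z + ((expB α q : ℝ) : ℂ))))
          (nhdsWithin p {p}ᶜ)
          (nhds (if ((expB α q : ℝ) : ℂ) = -p then coefA lam c q else 0)) := by
        intro q _
        by_cases hcase : ((expB α q : ℝ) : ℂ) = -p
        · rw [if_pos hcase]
          apply Tendsto.congr' _ (tendsto_const_nhds (x := coefA lam c q))
          filter_upwards [self_mem_nhdsWithin] with z hz
          rw [hcase]
          rw [show z + -p = z - p by ring, div_self (sub_ne_zero.mpr hz), mul_one]
        · rw [if_neg hcase]
          have hne : p + ((expB α q : ℝ) : ℂ) ≠ 0 := by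
            intro h
            exact hcase (by linear_combination h)
          have hden : Tendsto (fun z : ℂ => z + ((expB α q : ℝ) : ℂ))
              (nhdsWithin p {p}ᶜ) (nhds (p + ((expB α q : ℝ) : ℂ))) :=
            ((continuous_id.add continuous_const).tendsto p).mono_left nhdsWithin_le_nhds
          have := (tendsto_const_nhds (x := coefA lam c q)).mul
            ((hzp.div hden hne))
          rw [zero_div, mul_zero] at this
          exact this
      have := h1.add (tendsto_finset_sum _ h2)
      rw [zero_add] at this
      refine Tendsto.congr (fun z => (hPt z).symm) this
    have hfinal := Tendsto.congr' hev hlim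
    -- now identify L with the tsum
    have hreg1 : -p.re < α (N + 1) := lt_of_lt_of_le hN (gamm_le_left α N)
    have hreg2 : -p.re < α 0 + (N + 1) := lt_of_lt_of_le hN (gamm_le_right α N)
    have hcondre : ∀ k n : ℕ, (α k : ℂ) + (n : ℂ) = -p → α k + (n : ℝ) = -p.re := by
      intro k n h
      have := congrArg Complex.re h
      simpa using this
    have htsum : (∑' k : ℕ, ∑' n : ℕ,
        if (α k : ℂ) + (n : ℂ) = -p then (-(lam : ℂ)) ^ n * c k / (n.factorial : ℂ) else 0) = L := by
      have hinner : ∀ k : ℕ, (∑' n : ℕ,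
          if (α k : ℂ) + (n : ℂ) = -p then (-(lam : ℂ)) ^ n * c k / (n.factorial : ℂ) else 0)
          = ∑ n ∈ Finset.range (N + 1),
            (if (α k : ℂ) + (n : ℂ) = -p then (-(lam : ℂ)) ^ n * c k / (n.factorial : ℂ) else 0) := by
        intro k
        apply tsum_eq_sum
        intro n hn
        rw [Finset.mem_range, not_lt] at hn
        rw [if_neg]
        intro hcond
        have h1 := hcondre k n hcond
        have h2 : α 0 ≤ α k := hα.monotone (Nat.zero_le _)
        have h3 : (N : ℝ) + 1 ≤ n := by exact_mod_cast hn
        linarith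
      rw [tsum_congr hinner]
      rw [tsum_eq_sum (s := Finset.range (N + 1)) ?hout]
      case hout =>
        intro k hk
        rw [Finset.mem_range, not_lt] at hk
        apply Finset.sum_eq_zero
        intro n _
        rw [if_neg]
        intro hcond
        have h1 := hcondre k n hcond
        have h2 : α (N + 1) ≤ α k := hα.monotone hk
        have h3 : (0:ℝ) ≤ n := Nat.cast_nonneg _
        linarith
      rw [hL, AN, Finset.sum_product]
      refine Finset.sum_congr rfl fun k _ => Finset.sum_congr rfl fun n _ => ?_
      have hcast : ((expB α (k, n) : ℝ) : ℂ) = (α k : ℂ) + (n : ℂ) := by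
        rw [expB]; push_cast; ring
      rw [hcast]
      rfl
    rw [htsum]
    exact hfinal
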